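/- For all v ≥ 15, the maximum number of blocks in a partial Steiner triple system of order v in which no two blocks are disjoint equals ⌊(v-1)/2⌋. -/

import Mathlib

open Finset

/-- A block of the sunflower construction: `{0, 2i+1, 2i+2}` in `Fin v`. -/
def sun (v i : ℕ) (hv : 0 < v) : Finset (Fin v) :=
  {⟨0, hv⟩, ⟨(2*i+1) % v, Nat.mod_lt _ hv⟩, ⟨(2*i+2) % v, Nat.mod_lt _ hv⟩}

lemma mem_sun {v i : ℕ} {hv : 0 < v} {x : Fin v} :
    x ∈ sun v i hv ↔ (x : ℕ) = 0 ∨ (x : ℕ) = (2*i+1) % v ∨ (x : ℕ) = (2*i+2) % v := by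
  simp [sun, Fin.ext_iff]

/-- For v ≥ 15, the maximum number of blocks in a PSTS(v) in which no two
blocks are disjoint (i.e. β(1,v)) equals ⌊(v-1)/2⌋. -/
theorem stmt_13 (v : ℕ) (hv : 15 ≤ v) :
    IsGreatest {n : ℕ | ∃ B : Finset (Finset (Fin v)),
      (∀ b ∈ B, b.card = 3) ∧
      (∀ x y : Fin v, x ≠ y → (B.filter (fun b => x ∈ b ∧ y ∈ b)).card ≤ 1) ∧
      B.Nonempty ∧
      (∀ b1 ∈ B, ∀ b2 ∈ B, b1 ≠ b2 → ¬ Disjoint b1 b2) ∧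
      B.card = n} ((v - 1) / 2) := by
  have hv0 : 0 < v := by omega
  constructor
  · -- membership: the sunflower construction
    refine ⟨(Finset.range ((v-1)/2)).image (fun i => sun v i hv0), ?_, ?_, ?_, ?_, ?_⟩
    · intro b hb
      simp only [Finset.mem_image, Finset.mem_range] at hb
      obtain ⟨i, hi, rfl⟩ := hb
      have e1 : (2*i+1) % v = 2*i+1 := Nat.mod_eq_of_lt (by omega)
      have e2 : (2*i+2) % v = 2*i+2 := Nat.mod_eq_of_lt (by omega)
      rw [Finset.card_eq_three]
      refine ⟨_, _, _, ?_, ?_, ?_, rfl⟩ <;>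
        · simp only [Ne, Fin.ext_iff, e1, e2]; omega
    · intro x y hxy
      rw [Finset.card_le_one]
      intro b1 hb1 b2 hb2
      simp only [Finset.mem_filter, Finset.mem_image, Finset.mem_range] at hb1 hb2
      obtain ⟨⟨i, hi, rfl⟩, hx1, hy1⟩ := hb1
      obtain ⟨⟨j, hj, rfl⟩, hx2, hy2⟩ := hb2
      rw [mem_sun] at hx1 hy1 hx2 hy2
      rw [Nat.mod_eq_of_lt (by omega : 2*i+1 < v),
          Nat.mod_eq_of_lt (by omega : 2*i+2 < v)] at hx1 hy1
      rw [Nat.mod_eq_of_lt (by omega : 2*j+1 < v),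
          Nat.mod_eq_of_lt (by omega : 2*j+2 < v)] at hx2 hy2
      by_cases hij : i = j
      · subst hij; rfl
      · exact absurd (Fin.ext (show (x:ℕ) = (y:ℕ) by omega)) hxy
    · exact ⟨sun v 0 hv0, Finset.mem_image.mpr ⟨0, Finset.mem_range.mpr (by omega), rfl⟩⟩
    · intro b1 h1 b2 h2 _
      simp only [Finset.mem_image, Finset.mem_range] at h1 h2
      obtain ⟨i, _, rfl⟩ := h1
      obtain ⟨j, _, rfl⟩ := h2
      exact Finset.not_disjoint_iff.mpr
        ⟨⟨0, hv0⟩, mem_sun.mpr (Or.inl rfl), mem_sun.mpr (Or.inl rfl)⟩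
    · rw [Finset.card_image_of_injOn, Finset.card_range]
      intro i hi j hj hfij
      simp only [Finset.coe_range, Set.mem_Iio] at hi hj
      have hfij' : sun v i hv0 = sun v j hv0 := hfij
      have hm : (⟨(2*i+1) % v, Nat.mod_lt _ hv0⟩ : Fin v) ∈ sun v j hv0 := by
        rw [← hfij']; exact mem_sun.mpr (Or.inr (Or.inl rfl))
      rw [mem_sun] at hm
      simp only at hm
      rw [Nat.mod_eq_of_lt (by omega : 2*i+1 < v),
          Nat.mod_eq_of_lt (by omega : 2*j+1 < v),
          Nat.mod_eq_of_lt (by omega : 2*j+2 < v)] at hm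
      omega
  · -- upper bound
    rintro n ⟨B, hcard3, hlin, hne, hint, rfl⟩
    -- any two distinct blocks intersect in at most one point
    have hinter : ∀ b1 ∈ B, ∀ b2 ∈ B, b1 ≠ b2 → (b1 ∩ b2).card ≤ 1 := by
      intro b1 h1 b2 h2 hne12
      by_contra h
      rw [not_le] at h
      obtain ⟨x, hx, y, hy, hxy⟩ := Finset.one_lt_card.mp h
      simp only [Finset.mem_inter] at hx hy
      have h2le : 2 ≤ (B.filter (fun b => x ∈ b ∧ y ∈ b)).card := by
        apply Finset.one_lt_card.mpr
        exact ⟨b1, Finset.mem_filter.mpr ⟨h1, hx.1, hy.1⟩,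
               b2, Finset.mem_filter.mpr ⟨h2, hx.2, hy.2⟩, hne12⟩
      have := hlin x y (fun e => hxy e)
      omega
    by_cases hstar : ∃ x : Fin v, ∀ b ∈ B, x ∈ b
    · -- star case: all blocks through a common point x
      obtain ⟨x, hx⟩ := hstar
      have hdisj : ∀ b1 ∈ B, ∀ b2 ∈ B, b1 ≠ b2 →
          Disjoint (b1.erase x) (b2.erase x) := by
        intro b1 h1 b2 h2 hne12
        rw [Finset.disjoint_left]
        intro a ha1 ha2
        rw [Finset.mem_erase] at ha1 ha2
        have h2le : 2 ≤ (b1 ∩ b2).card := by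
          apply Finset.one_lt_card.mpr
          exact ⟨x, Finset.mem_inter.mpr ⟨hx b1 h1, hx b2 h2⟩,
                 a, Finset.mem_inter.mpr ⟨ha1.2, ha2.2⟩, fun e => ha1.1 e.symm⟩
        have := hinter b1 h1 b2 h2 hne12
        omega
      have hbu : (B.biUnion (fun b => b.erase x)).card = ∑ b ∈ B, (b.erase x).card :=
        Finset.card_biUnion hdisj
      have hsum : ∑ b ∈ B, (b.erase x).card = 2 * B.card := by
        rw [Finset.sum_congr rfl (fun b hb => ?_), Finset.sum_const, smul_eq_mul,
          mul_comm]
        rw [Finset.card_erase_of_mem (hx b hb), hcard3 b hb]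
      have hsub : B.biUnion (fun b => b.erase x) ⊆ Finset.univ.erase x := by
        intro a ha
        rw [Finset.mem_biUnion] at ha
        obtain ⟨b, _, hab⟩ := ha
        rw [Finset.mem_erase] at hab ⊢
        exact ⟨hab.1, Finset.mem_univ a⟩
      have hle := Finset.card_le_card hsub
      rw [hbu, hsum, Finset.card_erase_of_mem (Finset.mem_univ x),
        Finset.card_univ, Fintype.card_fin] at hle
      omega
    · -- non-star case: every point has degree ≤ 3, so |B| ≤ 7
      push_neg at hstar
      have hdeg : ∀ p : Fin v, (B.filter (fun b => p ∈ b)).card ≤ 3 := by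
        intro p
        obtain ⟨b0, hb0, hpb0⟩ := hstar p
        have h3 : b0.card = 3 := hcard3 b0 hb0
        rw [← h3]
        apply Finset.card_le_card_of_injOn
          (fun b => if h : (b ∩ b0).Nonempty then h.choose else p)
        · intro b hb
          rw [Finset.mem_coe, Finset.mem_filter] at hb
          have hbne : b ≠ b0 := fun e => hpb0 (e ▸ hb.2)
          have hnd : ¬ Disjoint b b0 := hint b hb.1 b0 hb0 hbne
          have hne' : (b ∩ b0).Nonempty := by
            rw [Finset.not_disjoint_iff] at hnd
            obtain ⟨a, ha1, ha2⟩ := hnd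
            exact ⟨a, Finset.mem_inter.mpr ⟨ha1, ha2⟩⟩
          simp only [dif_pos hne']
          exact (Finset.mem_inter.mp hne'.choose_spec).2
        · intro b1 hb1 b2 hb2 heq
          simp only [Finset.coe_filter, Set.mem_setOf_eq] at hb1 hb2
          by_contra hne12
          have hne1 : (b1 ∩ b0).Nonempty := by
            have hnd := hint b1 hb1.1 b0 hb0 (fun e => hpb0 (e ▸ hb1.2))
            rw [Finset.not_disjoint_iff] at hnd
            obtain ⟨a, ha1, ha2⟩ := hnd
            exact ⟨a, Finset.mem_inter.mpr ⟨ha1, ha2⟩⟩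
          have hne2 : (b2 ∩ b0).Nonempty := by
            have hnd := hint b2 hb2.1 b0 hb0 (fun e => hpb0 (e ▸ hb2.2))
            rw [Finset.not_disjoint_iff] at hnd
            obtain ⟨a, ha1, ha2⟩ := hnd
            exact ⟨a, Finset.mem_inter.mpr ⟨ha1, ha2⟩⟩
          simp only [dif_pos hne1, dif_pos hne2] at heq
          set q := hne1.choose with hq
          have hq1 : q ∈ b1 ∩ b0 := hne1.choose_spec
          have hq2 : q ∈ b2 ∩ b0 := heq ▸ hne2.choose_spec
          rw [Finset.mem_inter] at hq1 hq2
          have hqp : q ≠ p := fun e => hpb0 (e ▸ hq1.2)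
          have h2le : 2 ≤ (b1 ∩ b2).card := by
            apply Finset.one_lt_card.mpr
            exact ⟨q, Finset.mem_inter.mpr ⟨hq1.1, hq2.1⟩,
                   p, Finset.mem_inter.mpr ⟨hb1.2, hb2.2⟩, hqp⟩
          have := hinter b1 hb1.1 b2 hb2.1 hne12
          omega
      obtain ⟨b, hb⟩ := hne
      have hcover : B.erase b ⊆ b.biUnion (fun x => (B.erase b).filter (fun b' => x ∈ b')) := by
        intro b' hb'
        rw [Finset.mem_erase] at hb'
        have hnd := hint b' hb'.2 b hb hb'.1
        rw [Finset.not_disjoint_iff] at hnd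
        obtain ⟨a, ha1, ha2⟩ := hnd
        rw [Finset.mem_biUnion]
        exact ⟨a, ha2, Finset.mem_filter.mpr ⟨Finset.mem_erase.mpr hb', ha1⟩⟩
      have h1 : (B.erase b).card ≤ ∑ x ∈ b, ((B.erase b).filter (fun b' => x ∈ b')).card :=
        (Finset.card_le_card hcover).trans Finset.card_biUnion_le
      have h2 : ∀ x ∈ b, ((B.erase b).filter (fun b' => x ∈ b')).card ≤ 2 := by
        intro x hx
        have heq : (B.erase b).filter (fun b' => x ∈ b')
            = (B.filter (fun b' => x ∈ b')).erase b := by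
          ext c
          simp only [Finset.mem_filter, Finset.mem_erase]
          tauto
        rw [heq, Finset.card_erase_of_mem (Finset.mem_filter.mpr ⟨hb, hx⟩)]
        have := hdeg x
        omega
      have h3 : ∑ x ∈ b, ((B.erase b).filter (fun b' => x ∈ b')).card ≤ 6 := by
        calc ∑ x ∈ b, ((B.erase b).filter (fun b' => x ∈ b')).card
            ≤ ∑ _x ∈ b, 2 := Finset.sum_le_sum h2
          _ = 6 := by rw [Finset.sum_const, smul_eq_mul, hcard3 b hb]
      have hce : (B.erase b).card = B.card - 1 := Finset.card_erase_of_mem hb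
      have hBpos : 1 ≤ B.card := Finset.card_pos.mpr ⟨b, hb⟩
      omega
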